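/- Let φ ∈ L²(𝕋^d) with Fourier coefficients c_k(φ), and f = Σ_{y ∈ P(M)} a_y T_y φ where T_y φ(x) = φ(x - 2πy). Then for all h ∈ G(M^T) and z ∈ ℤ^d, c_{h + M^T z}(f) = â_h · c_{h + M^T z}(φ), where â_h = Σ_{y ∈ P(M)} a_y e^{-2πi h^T y}. -/

import Mathlib

open Matrix Real MeasureTheory Submodule Pointwise

/-- `x` belongs to the lattice `Λ(M) = M⁻¹ ℤ^d`. -/
def inLattice {d : ℕ} (M : Matrix (Fin d) (Fin d) ℤ) (x : Fin d → ℝ) : Prop :=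
  ∃ z : Fin d → ℤ, (M.map (Int.cast : ℤ → ℝ)).mulVec x = fun i => (z i : ℝ)

/-- `P` is a pattern for `M`: a complete set of representatives of `M⁻¹ℤ^d mod ℤ^d`. -/
def IsPattern {d : ℕ} (M : Matrix (Fin d) (Fin d) ℤ) (P : Set (Fin d → ℝ)) : Prop :=
  (∀ y ∈ P, inLattice M y) ∧
  ∀ x, inLattice M x → ∃! y, y ∈ P ∧ ∃ z : Fin d → ℤ, x - y = fun i => (z i : ℝ)

/-- `G` is a complete set of representatives of `ℤ^d` modulo the subgroup `A ℤ^d`. -/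
def IsRepMod {d : ℕ} (A : Matrix (Fin d) (Fin d) ℤ) (G : Set (Fin d → ℤ)) : Prop :=
  ∀ k : Fin d → ℤ, ∃! h, h ∈ G ∧ ∃ z : Fin d → ℤ, k = h + A.mulVec z

/-- The character value `e^{-2πi kᵀ y}`. -/
noncomputable def ec {d : ℕ} (k : Fin d → ℤ) (y : Fin d → ℝ) : ℂ :=
  Complex.exp (-(2 * π * Complex.I) * ∑ i, (k i : ℂ) * (y i : ℂ))

/-- A fundamental domain `[0,2π)^d` for the torus `𝕋^d`. -/
def torusBox (d : ℕ) : Set (Fin d → ℝ) := Set.univ.pi fun _ => Set.Ico 0 (2 * π)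

/-- `f` is `2π`-periodic in every coordinate direction. -/
def TorusPeriodic {d : ℕ} (f : (Fin d → ℝ) → ℂ) : Prop :=
  ∀ (x : Fin d → ℝ) (z : Fin d → ℤ), f (x + fun i => 2 * π * (z i : ℝ)) = f x

/-- The `k`-th Fourier coefficient `c_k(f) = (2π)^{-d} ∫_{𝕋^d} f(x) e^{-i kᵀ x} dx`. -/
noncomputable def fc {d : ℕ} (f : (Fin d → ℝ) → ℂ) (k : Fin d → ℤ) : ℂ :=
  ((1 / (2 * π) ^ d : ℝ) : ℂ) *
    ∫ x in torusBox d, f x * Complex.exp (-Complex.I * ∑ i, (k i : ℂ) * (x i : ℂ))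

/-- The normalized `L²(𝕋^d)` inner product `⟨f,g⟩ = (2π)^{-d} ∫ f ḡ`. -/
noncomputable def ip {d : ℕ} (f g : (Fin d → ℝ) → ℂ) : ℂ :=
  ((1 / (2 * π) ^ d : ℝ) : ℂ) * ∫ x in torusBox d, f x * (starRingEnd ℂ) (g x)

/-- The translation operator `T_y f = f(· - 2πy)`. -/
noncomputable def Tr {d : ℕ} (y : Fin d → ℝ) (f : (Fin d → ℝ) → ℂ) : (Fin d → ℝ) → ℂ :=
  fun x => f (x - (2 * π) • y)

noncomputable def tbasis (d : ℕ) : Module.Basis (Fin d) ℝ (Fin d → ℝ) :=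
  (Pi.basisFun ℝ (Fin d)).unitsSMul fun _ => Units.mk0 (2 * π) (by positivity)

lemma tbasis_repr {d : ℕ} (x : Fin d → ℝ) (i : Fin d) :
    (tbasis d).repr x i = (2 * π)⁻¹ * x i := by
  rw [tbasis, Module.Basis.repr_unitsSMul]
  simp [Pi.basisFun_repr, Units.smul_def]
lemma tbasis_fd (d : ℕ) : ZSpan.fundamentalDomain (tbasis d) = torusBox d := by
  ext x
  have h2π : (0:ℝ) < 2 * π := by positivity
  simp only [ZSpan.mem_fundamentalDomain, tbasis_repr, Set.mem_Ico, torusBox, Set.mem_pi,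
    Set.mem_univ, forall_true_left]
  refine forall_congr' fun i => ?_
  rw [inv_mul_lt_iff₀ h2π, mul_one, mul_nonneg_iff_of_pos_left (inv_pos.mpr h2π)]

lemma tbasis_lattice {d : ℕ} {l : Fin d → ℝ} (hl : l ∈ span ℤ (Set.range (tbasis d))) :
    ∃ z : Fin d → ℤ, l = fun i => 2 * π * (z i : ℝ) := by
  have h2π : (2 * π : ℝ) ≠ 0 := by positivity
  rw [Module.Basis.mem_span_iff_repr_mem] at hl
  choose z hz using hl
  refine ⟨z, funext fun i => ?_⟩
  have := hz i
  rw [tbasis_repr] at this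
  simp only [algebraMap_int_eq, eq_intCast] at this
  field_simp at this
  linarith [this]

abbrev TLat (d : ℕ) : AddSubgroup (Fin d → ℝ) := (span ℤ (Set.range (tbasis d))).toAddSubgroup

instance (d : ℕ) : Countable (TLat d) := by
  change Countable (span ℤ (Set.range (tbasis d))); infer_instance

lemma fd_box (d : ℕ) : IsAddFundamentalDomain (TLat d) (torusBox d) := by
  rw [← tbasis_fd]
  exact ZSpan.isAddFundamentalDomain' (tbasis d) volume

lemma lat_invariance {d : ℕ} {g : (Fin d → ℝ) → ℂ} (hg : TorusPeriodic g) :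
    ∀ (l : TLat d) (x : Fin d → ℝ), g (l +ᵥ x) = g x := by
  rintro ⟨l, hl⟩ x
  obtain ⟨z, rfl⟩ := tbasis_lattice hl
  have := hg x z
  show g ((fun i => 2 * π * (z i : ℝ)) + x) = g x
  rwa [add_comm]

lemma fd_box_vadd {d : ℕ} (c : Fin d → ℝ) :
    IsAddFundamentalDomain (TLat d) (c +ᵥ torusBox d) := by
  haveI : VAddCommClass (Fin d → ℝ) (TLat d) (Fin d → ℝ) :=
    ⟨fun a b c => by
      show a + ((b : Fin d → ℝ) + c) = (b : Fin d → ℝ) + (a + c)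
      abel⟩
  exact (fd_box d).vadd_of_comm c

lemma vadd_box_eq {d : ℕ} (c : Fin d → ℝ) :
    (-c) +ᵥ torusBox d = (· - c) '' torusBox d := by
  ext u
  simp only [Set.mem_vadd_set, Set.mem_image]
  constructor
  · rintro ⟨t, ht, rfl⟩
    exact ⟨t, ht, by show t - c = -c + t; abel⟩
  · rintro ⟨t, ht, rfl⟩
    exact ⟨t, ht, by show -c + t = t - c; abel⟩

lemma key_integrableOn {d : ℕ} {g : (Fin d → ℝ) → ℂ} (hg : TorusPeriodic g)
    (hint : IntegrableOn g (torusBox d)) (c : Fin d → ℝ) :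
    IntegrableOn (fun x => g (x - c)) (torusBox d) := by
  have h1 : IntegrableOn g ((-c) +ᵥ torusBox d) :=
    ((fd_box d).integrableOn_iff (fd_box_vadd (-c)) (lat_invariance hg)).mp hint
  rw [vadd_box_eq] at h1
  have := ((measurePreserving_sub_right volume c).integrableOn_image
      (MeasurableEquiv.subRight c).measurableEmbedding).mp h1
  exact this

lemma key_integral {d : ℕ} {g : (Fin d → ℝ) → ℂ} (hg : TorusPeriodic g) (c : Fin d → ℝ) :
    ∫ x in torusBox d, g (x - c) = ∫ x in torusBox d, g x := by
  have h3 : ∫ x in (· - c) '' torusBox d, g x = ∫ x in torusBox d, g (x - c) :=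
    (measurePreserving_sub_right volume c).setIntegral_image_emb
      (MeasurableEquiv.subRight c).measurableEmbedding g _
  rw [← h3, ← vadd_box_eq]
  exact (fd_box_vadd (-c)).setIntegral_eq (fd_box d) (lat_invariance hg)

noncomputable def chr {d : ℕ} (k : Fin d → ℤ) (x : Fin d → ℝ) : ℂ :=
  Complex.exp (-Complex.I * ∑ i, (k i : ℂ) * (x i : ℂ))

lemma chr_add {d : ℕ} (k : Fin d → ℤ) (x y : Fin d → ℝ) :
    chr k (x + y) = chr k x * chr k y := by
  rw [chr, chr, chr, ← Complex.exp_add]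
  congr 1
  simp only [Pi.add_apply, Complex.ofReal_add, mul_add, Finset.sum_add_distrib]

lemma chr_cont {d : ℕ} (k : Fin d → ℤ) : Continuous (chr k) := by
  refine Complex.continuous_exp.comp (continuous_const.mul ?_)
  exact continuous_finset_sum _ fun i _ =>
    continuous_const.mul (Complex.continuous_ofReal.comp (continuous_apply i))

lemma chr_eq {d : ℕ} (k : Fin d → ℤ) (x : Fin d → ℝ) :
    chr k x = Complex.exp (((-(∑ i, (k i : ℝ) * x i) : ℝ) : ℂ) * Complex.I) := by
  rw [chr]
  congr 1
  push_cast
  ring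

lemma chr_norm {d : ℕ} (k : Fin d → ℤ) (x : Fin d → ℝ) : ‖chr k x‖ = 1 := by
  rw [chr_eq, Complex.norm_exp_ofReal_mul_I]

lemma chr_int {d : ℕ} (k : Fin d → ℤ) (z : Fin d → ℤ) :
    chr k (fun i => 2 * π * (z i : ℝ)) = 1 := by
  rw [chr_eq]
  have : (-(∑ i, (k i : ℝ) * (2 * π * (z i : ℝ))) : ℝ)
      = ((-(∑ i, k i * z i) : ℤ) : ℝ) * (2 * π) := by
    push_cast
    rw [neg_mul, neg_inj, Finset.sum_mul]
    exact Finset.sum_congr rfl fun i _ => by ring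
  rw [this, Complex.ofReal_mul]
  push_cast
  have := Complex.exp_int_mul_two_pi_mul_I (-(∑ i, k i * z i))
  push_cast at this
  rw [← this]
  congr 1
  ring
-- key character computation on a pattern point
lemma chr_pattern {d : ℕ} {M : Matrix (Fin d) (Fin d) ℤ} {y : Fin d → ℝ}
    (hy : inLattice M y) (h : Fin d → ℤ) (z : Fin d → ℤ) :
    chr (h + Mᵀ.mulVec z) ((2 * π) • y) = ec h y := by
  obtain ⟨n, hn⟩ := hy
  -- the integer N
  set N : ℤ := ∑ j, z j * n j with hNdef
  have hmv : ∀ i, ((Mᵀ.mulVec z) i : ℝ) = ∑ j, (M j i : ℝ) * (z j : ℝ) := by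
    intro i
    rw [Matrix.mulVec, dotProduct]
    push_cast
    simp [Matrix.transpose_apply]
  have hn' : ∀ j, (∑ i, (M j i : ℝ) * y i) = (n j : ℝ) := by
    intro j
    have := congrFun hn j
    simpa [Matrix.mulVec, dotProduct, Matrix.map_apply] using this
  have hN : ∑ i, ((Mᵀ.mulVec z) i : ℝ) * y i = (N : ℝ) := by
    calc ∑ i, ((Mᵀ.mulVec z) i : ℝ) * y i
        = ∑ i, ∑ j, ((M j i : ℝ) * (z j : ℝ)) * y i := by
          refine Finset.sum_congr rfl fun i _ => ?_
          rw [hmv i, Finset.sum_mul]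
      _ = ∑ j, (z j : ℝ) * ∑ i, (M j i : ℝ) * y i := by
          rw [Finset.sum_comm]
          refine Finset.sum_congr rfl fun j _ => ?_
          rw [Finset.mul_sum]
          exact Finset.sum_congr rfl fun i _ => by ring
      _ = ∑ j, (z j : ℝ) * (n j : ℝ) := by
          refine Finset.sum_congr rfl fun j _ => ?_
          rw [hn' j]
      _ = (N : ℝ) := by rw [hNdef]; push_cast; rfl
  -- now compute
  have hsum : (∑ i, ((h + Mᵀ.mulVec z) i : ℝ) * ((2 * π) • y) i)
      = 2 * π * (∑ i, (h i : ℝ) * y i) + (N : ℝ) * (2 * π) := by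
    have : ∀ i, (((h + Mᵀ.mulVec z) i : ℝ) * ((2 * π) • y) i)
        = 2 * π * ((h i : ℝ) * y i) + (((Mᵀ.mulVec z) i : ℝ) * y i) * (2 * π) := by
      intro i
      have : ((2 * π) • y) i = 2 * π * y i := rfl
      rw [this, Pi.add_apply]
      push_cast
      ring
    rw [Finset.sum_congr rfl fun i _ => this i, Finset.sum_add_distrib,
      ← Finset.mul_sum, ← Finset.sum_mul, hN]
  rw [chr_eq, hsum]
  have hec : ec h y = Complex.exp (((-(2 * π * (∑ i, (h i : ℝ) * y i)) : ℝ) : ℂ) * Complex.I) := by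
    rw [ec]
    congr 1
    push_cast
    ring
  rw [hec]
  have h1 := Complex.exp_int_mul_two_pi_mul_I (-N)
  calc Complex.exp (((-(2 * π * (∑ i, (h i : ℝ) * y i) + (N : ℝ) * (2 * π)) : ℝ) : ℂ) * Complex.I)
      = Complex.exp (((-(2 * π * (∑ i, (h i : ℝ) * y i)) : ℝ) : ℂ) * Complex.I)
        * Complex.exp (((-N : ℤ) : ℂ) * (2 * π * Complex.I)) := by
        rw [← Complex.exp_add]
        congr 1
        push_cast
        ring
    _ = Complex.exp (((-(2 * π * (∑ i, (h i : ℝ) * y i)) : ℝ) : ℂ) * Complex.I) := by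
        rw [h1, mul_one]

/-- If `f = Σ_{y ∈ P(M)} a_y T_y φ`, then for all `h ∈ G(Mᵀ)` and `z ∈ ℤ^d`,
`c_{h+Mᵀz}(f) = â_h · c_{h+Mᵀz}(φ)` with `â_h = Σ_{y ∈ P(M)} a_y e^{-2πi hᵀ y}`. -/
theorem fourierCoeff_of_translate_combination (d : ℕ) (M : Matrix (Fin d) (Fin d) ℤ)
    (hM : M.det ≠ 0) (P : Finset (Fin d → ℝ)) (hP : IsPattern M ↑P)
    (G : Set (Fin d → ℤ)) (hG : IsRepMod Mᵀ G)
    (φ : (Fin d → ℝ) → ℂ) (hper : TorusPeriodic φ)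
    (hint : IntegrableOn φ (torusBox d))
    (a : (Fin d → ℝ) → ℂ) (f : (Fin d → ℝ) → ℂ)
    (hf : f = fun x => ∑ y ∈ P, a y * Tr y φ x) :
    ∀ h ∈ G, ∀ z : Fin d → ℤ,
      fc f (h + Mᵀ.mulVec z) = (∑ y ∈ P, a y * ec h y) * fc φ (h + Mᵀ.mulVec z) := by
  intro h hh z
  subst hf
  set k : Fin d → ℤ := h + Mᵀ.mulVec z with hk
  set g : (Fin d → ℝ) → ℂ := fun x => φ x * chr k x with hg
  have hgper : TorusPeriodic g := by
    intro x zz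
    rw [hg]
    dsimp only
    rw [hper x zz, chr_add, chr_int, mul_one]
  have hgint : IntegrableOn g (torusBox d) := by
    have h1 : Integrable (fun x => chr k x * φ x) (volume.restrict (torusBox d)) :=
      hint.bdd_mul ((chr_cont k).aestronglyMeasurable).restrict
        (c := 1) (Filter.Eventually.of_forall fun x => le_of_eq (chr_norm k x))
    exact h1.congr (Filter.Eventually.of_forall fun x => by rw [hg]; dsimp only; ring)
  have hrw : ∀ x : Fin d → ℝ, (∑ y ∈ P, a y * Tr y φ x) * chr k x
      = ∑ y ∈ P, (a y * chr k ((2 * π) • y)) * g (x - (2 * π) • y) := by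
    intro x
    rw [Finset.sum_mul]
    refine Finset.sum_congr rfl fun y _ => ?_
    have hx : chr k x = chr k (x - (2 * π) • y) * chr k ((2 * π) • y) := by
      rw [← chr_add, sub_add_cancel]
    rw [Tr, hg]
    dsimp only
    rw [hx]
    ring
  have hmain : (∫ x in torusBox d, (∑ y ∈ P, a y * Tr y φ x) * chr k x)
      = ∑ y ∈ P, (a y * ec h y) * ∫ x in torusBox d, g x := by
    calc (∫ x in torusBox d, (∑ y ∈ P, a y * Tr y φ x) * chr k x)
        = ∫ x in torusBox d, ∑ y ∈ P, (a y * chr k ((2 * π) • y)) * g (x - (2 * π) • y) :=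
          integral_congr_ae (Filter.Eventually.of_forall fun x => hrw x)
      _ = ∑ y ∈ P, ∫ x in torusBox d, (a y * chr k ((2 * π) • y)) * g (x - (2 * π) • y) :=
          integral_finset_sum P fun y _ =>
            ((key_integrableOn hgper hgint ((2 * π) • y)).const_mul _)
      _ = ∑ y ∈ P, (a y * chr k ((2 * π) • y)) * ∫ x in torusBox d, g (x - (2 * π) • y) := by
          exact Finset.sum_congr rfl fun y _ => integral_const_mul _ _
      _ = ∑ y ∈ P, (a y * ec h y) * ∫ x in torusBox d, g x := by
          refine Finset.sum_congr rfl fun y hy => ?_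
          rw [key_integral hgper, chr_pattern (hP.1 y (by exact_mod_cast hy)) h z]
  show ((1 / (2 * π) ^ d : ℝ) : ℂ) * (∫ x in torusBox d,
      (∑ y ∈ P, a y * Tr y φ x) * chr k x)
    = (∑ y ∈ P, a y * ec h y) * (((1 / (2 * π) ^ d : ℝ) : ℂ) * ∫ x in torusBox d, φ x * chr k x)
  rw [hmain, ← Finset.sum_mul]
  ring
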